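/- In the exploration process of the DC-PPM, condition on the first m explored vertices having types x_1, …, x_m. Then the types of the unexplored vertices in U(m) are i.i.d. with law μ^(m) = μ^(m)_{x_1,…,x_m} given by dμ^(m)(y) = g(y)·dμ(y) / ∫_S g(z) dμ(z), where g(y) = Π_{i=1}^m (1 - κ(x_i, y)/n). Moreover, in the regime m = o(n) there exists N_m such that for all n ≥ N_m and all (x_1, …, x_m), the total variation distance between μ^(m)_{x_1,…,x_m} and μ is at most 2κ_max·m/n. -/

import Mathlib

noncomputable section

/-- The kernel `κ(x,y) = |xy|·(a·1{xy>0} + b·1{xy<0})` on the type space `S = (-W) ∪ W`. -/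
def kfun (a b : ℝ) (x y : ℝ) : ℝ := |x * y| * (if 0 < x * y then a else b)

/-- `κ_max`, the maximum of `κ` on `S × S` when `W ⊆ [φmin, φmax]`. -/
def kfunMax (a b φmax : ℝ) : ℝ := max a b * φmax ^ 2

/-- `κ_min`, the minimum of `κ` on `S × S` when `W ⊆ [φmin, φmax]`. -/
def kfunMin (a b φmin : ℝ) : ℝ := min a b * φmin ^ 2

/-- The law `μ` of a type `x = σφ`: `μ(A) = ∫_A (1/2) dν(|x|)`. -/
def typeLaw (ν : MeasureTheory.Measure ℝ) : MeasureTheory.Measure ℝ :=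
  (2 : ENNReal)⁻¹ • (ν.map (fun x => -x) + ν)

/-- Normalization of a finite nonzero measure to a probability measure. -/
def mnormalize (μ : MeasureTheory.Measure ℝ) : MeasureTheory.Measure ℝ :=
  (μ Set.univ)⁻¹ • μ

/-- The law `μ^{(m)} = μ^{(m)}_{x_1,…,x_m}` of the types of unexplored vertices after the
vertices of types `x_1, …, x_m` have been explored:
`dμ^{(m)}(y) ∝ ∏_{i=1}^m (1 - κ(x_i,y)/n) · dμ(y)`. -/
def muExplored (a b : ℝ) (ν : MeasureTheory.Measure ℝ) (n m : ℕ) (x : Fin m → ℝ) :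
    MeasureTheory.Measure ℝ :=
  mnormalize ((typeLaw ν).withDensity fun y =>
    ENNReal.ofReal (∏ i : Fin m, (1 - kfun a b (x i) y / n)))

/-- The size-biased kernel law `dμ*_x(y) ∝ κ(x,y)·dμ(y)` associated to a base law `μ`. -/
def kernelBiased (a b : ℝ) (μ : MeasureTheory.Measure ℝ) (x : ℝ) : MeasureTheory.Measure ℝ :=
  mnormalize (μ.withDensity fun y => ENNReal.ofReal (kfun a b x y))

/-- `λ_x(S) = ∫_S κ(x,y) dμ(y)`. -/
def lamTotal (a b : ℝ) (ν : MeasureTheory.Measure ℝ) (x : ℝ) : ℝ :=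
  ∫ y, kfun a b x y ∂(typeLaw ν)

open MeasureTheory ProbabilityTheory Filter Topology

lemma kfun_nonneg {a b : ℝ} (ha : 0 ≤ a) (hb : 0 ≤ b) (x y : ℝ) : 0 ≤ kfun a b x y := by
  unfold kfun
  have : (0:ℝ) ≤ if 0 < x * y then a else b := by split <;> assumption
  exact mul_nonneg (abs_nonneg _) this

lemma kfun_le {a b φmax x y : ℝ} (ha : 0 ≤ a) (hb : 0 ≤ b)
    (hx : |x| ≤ φmax) (hy : |y| ≤ φmax) : kfun a b x y ≤ kfunMax a b φmax := by
  unfold kfun kfunMax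
  have hc : (if 0 < x * y then a else b) ≤ max a b := by
    split
    · exact le_max_left a b
    · exact le_max_right a b
  have hc0 : (0:ℝ) ≤ if 0 < x * y then a else b := by split <;> assumption
  have hxy : |x * y| ≤ φmax ^ 2 := by
    rw [abs_mul]; nlinarith [abs_nonneg x, abs_nonneg y]
  nlinarith [abs_nonneg (x * y)]

lemma measurable_kfun (a b x : ℝ) : Measurable (kfun a b x) := by
  unfold kfun
  have h1 : Measurable fun y => x * y := measurable_id.const_mul x
  exact h1.abs.mul (Measurable.ite (measurableSet_lt measurable_const h1)
    measurable_const measurable_const)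

lemma measurable_gE (a b : ℝ) (n m : ℕ) (x : Fin m → ℝ) :
    Measurable fun y => ENNReal.ofReal (∏ i : Fin m, (1 - kfun a b (x i) y / (n:ℝ))) := by
  apply Measurable.ennreal_ofReal
  apply Finset.measurable_prod
  intro i _
  exact (measurable_const.sub ((measurable_kfun a b (x i)).div_const _))

lemma typeLaw_prob (ν : Measure ℝ) (hν : IsProbabilityMeasure ν) :
    IsProbabilityMeasure (typeLaw ν) := by
  constructor
  have hm : Measurable fun x : ℝ => -x := measurable_neg
  simp [typeLaw, Measure.smul_apply, Measure.add_apply, Measure.map_apply hm MeasurableSet.univ,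
    measure_univ, smul_eq_mul]
  rw [← two_mul]; exact ENNReal.mul_inv_cancel (by norm_num) (by norm_num)

lemma typeLaw_ae {φmin φmax : ℝ} (hφmin : 0 < φmin) (ν : Measure ℝ)
    (hsupp : ∀ᵐ x ∂ν, x ∈ Set.Icc φmin φmax) :
    ∀ᵐ y ∂(typeLaw ν), |y| ∈ Set.Icc φmin φmax := by
  have hm : Measurable fun x : ℝ => -x := measurable_neg
  have hset : {y : ℝ | ¬ |y| ∈ Set.Icc φmin φmax} ⊆ {y | |y| ∈ Set.Icc φmin φmax}ᶜ := le_refl _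
  have hν1 : ν {y : ℝ | ¬ |y| ∈ Set.Icc φmin φmax} = 0 := by
    rw [ae_iff] at hsupp
    refine measure_mono_null ?_ hsupp
    intro y hy
    simp only [Set.mem_setOf_eq] at *
    intro hmem
    exact hy (by rw [abs_of_pos (lt_of_lt_of_le hφmin hmem.1)]; exact hmem)
  have hmeas : MeasurableSet {y : ℝ | |y| ∈ Set.Icc φmin φmax} :=
    measurable_abs (measurableSet_Icc)
  rw [ae_iff]
  simp only [typeLaw, Measure.smul_apply, Measure.add_apply, smul_eq_mul]
  have hmeasc : MeasurableSet {a : ℝ | |a| ∉ Set.Icc φmin φmax} := hmeas.compl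
  rw [Measure.map_apply hm hmeasc]
  have hpre : (fun x : ℝ => -x) ⁻¹' {a : ℝ | |a| ∉ Set.Icc φmin φmax}
      = {a : ℝ | |a| ∉ Set.Icc φmin φmax} := by
    ext y; simp [abs_neg]
  rw [hpre, hν1]
  simp

lemma kfunMax_pos {a b φmin φmax : ℝ} (ha : 0 < a) (hb : 0 < b) (hφmin : 0 < φmin)
    (hφ : φmin ≤ φmax) : 0 < kfunMax a b φmax := by
  unfold kfunMax
  have : 0 < φmax := lt_of_lt_of_le hφmin hφ
  have : 0 < max a b := lt_max_of_lt_left ha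
  positivity

lemma gE_bounds {a b φmin φmax : ℝ} (ha : 0 < a) (hb : 0 < b) (hφmin : 0 < φmin)
    (hφ : φmin ≤ φmax) (ν : Measure ℝ) (hsupp : ∀ᵐ x ∂ν, x ∈ Set.Icc φmin φmax)
    (n m : ℕ) (hn : kfunMax a b φmax ≤ n) (x : Fin m → ℝ)
    (hx : ∀ i, |x i| ∈ Set.Icc φmin φmax) :
    ∀ᵐ y ∂(typeLaw ν),
      (1 - kfunMax a b φmax / n) ^ m ≤ ∏ i : Fin m, (1 - kfun a b (x i) y / n)
      ∧ ∏ i : Fin m, (1 - kfun a b (x i) y / n) ≤ 1 := by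
  have hK : 0 < kfunMax a b φmax := kfunMax_pos ha hb hφmin hφ
  have hn0 : (0:ℝ) < n := lt_of_lt_of_le hK hn
  filter_upwards [typeLaw_ae hφmin ν hsupp] with y hy
  have hfacl : ∀ i : Fin m, 1 - kfunMax a b φmax / n ≤ 1 - kfun a b (x i) y / n := by
    intro i
    have h := (div_le_div_iff_of_pos_right hn0).mpr (kfun_le ha.le hb.le (hx i).2 hy.2)
    linarith
  have hl0 : (0:ℝ) ≤ 1 - kfunMax a b φmax / n := by
    have : kfunMax a b φmax / n ≤ 1 := by
      rw [div_le_one hn0]; exact hn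
    linarith
  have hfacu : ∀ i : Fin m, 1 - kfun a b (x i) y / n ≤ 1 := by
    intro i
    have h0 : 0 ≤ kfun a b (x i) y := kfun_nonneg ha.le hb.le _ _
    have : 0 ≤ kfun a b (x i) y / n := div_nonneg h0 hn0.le
    linarith
  constructor
  · calc (1 - kfunMax a b φmax / n) ^ m
        = ∏ _i : Fin m, (1 - kfunMax a b φmax / n) := by
          rw [Finset.prod_const, Finset.card_univ, Fintype.card_fin]
      _ ≤ ∏ i : Fin m, (1 - kfun a b (x i) y / n) :=
          Finset.prod_le_prod (fun i _ => hl0) (fun i _ => hfacl i)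
  · exact Finset.prod_le_one (fun i _ => le_trans hl0 (hfacl i)) (fun i _ => hfacu i)

lemma tv_core {p t z c : ℝ} {m : ℕ} (hp0 : 0 ≤ p) (hp1 : p ≤ 1) (hc : 0 ≤ c)
    (hc1 : c ≤ 1/2) (hcm : c * m ≤ 1/2) (hz : (1 - c) ^ m ≤ z) (hz1 : z ≤ 1)
    (ht : (1 - c) ^ m * p ≤ t) (htp : t ≤ p) : |t / z - p| ≤ 2 * (c * m) := by
  have h1 : 1 - c * m ≤ (1 - c) ^ m := by
    have := one_add_mul_le_pow (by linarith : (-2:ℝ) ≤ -c) m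
    have hcast : (1:ℝ) + m * (-c) = 1 - c * m := by ring
    rw [hcast, (by ring : (1:ℝ) + -c = 1 - c)] at this
    exact this
  have hcm0 : 0 ≤ c * m := mul_nonneg hc (Nat.cast_nonneg m)
  have hzpos : (0:ℝ) < z := by nlinarith
  have hpow0 : (0:ℝ) ≤ (1 - c) ^ m := pow_nonneg (by linarith) m
  have ht0 : 0 ≤ t := le_trans (mul_nonneg hpow0 hp0) ht
  have htl : (1 - c * m) * p ≤ t := le_trans (mul_le_mul_of_nonneg_right h1 hp0) ht
  have hzl : 1 - c * m ≤ z := by linarith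
  have hupper : t / z ≤ p + 2 * (c * m) := by
    rw [div_le_iff₀ hzpos]
    nlinarith [mul_nonneg hcm0 hcm0, mul_nonneg hp0 hcm0]
  have hlower : p - 2 * (c * m) ≤ t / z := by
    rw [le_div_iff₀ hzpos]
    nlinarith [mul_nonneg hcm0 hzpos.le, mul_nonneg hcm0 hp0,
      mul_nonneg hp0 (sub_nonneg.mpr hz1)]
  rw [abs_le]
  constructor <;> linarith

lemma lint_le_measure {a b φmin φmax : ℝ} {ν : Measure ℝ} {n m : ℕ} {x : Fin m → ℝ}
    (ha : 0 < a) (hb : 0 < b) (hφmin : 0 < φmin) (hφ : φmin ≤ φmax)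
    (hsupp : ∀ᵐ x ∂ν, x ∈ Set.Icc φmin φmax)
    (hn : kfunMax a b φmax ≤ n) (hx : ∀ i, |x i| ∈ Set.Icc φmin φmax) (A : Set ℝ) :
    ∫⁻ y in A, ENNReal.ofReal (∏ i : Fin m, (1 - kfun a b (x i) y / n)) ∂(typeLaw ν)
      ≤ typeLaw ν A := by
  have hae := gE_bounds ha hb hφmin hφ ν hsupp n m hn x hx
  calc ∫⁻ y in A, ENNReal.ofReal (∏ i : Fin m, (1 - kfun a b (x i) y / n)) ∂(typeLaw ν)
      ≤ ∫⁻ _ in A, 1 ∂(typeLaw ν) := by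
        refine lintegral_mono_ae (ae_restrict_of_ae (hae.mono fun y hy => ?_))
        exact ENNReal.ofReal_le_one.mpr hy.2
    _ = typeLaw ν A := setLIntegral_one A

lemma lint_ge_measure {a b φmin φmax : ℝ} {ν : Measure ℝ} {n m : ℕ} {x : Fin m → ℝ}
    (ha : 0 < a) (hb : 0 < b) (hφmin : 0 < φmin) (hφ : φmin ≤ φmax)
    (hsupp : ∀ᵐ x ∂ν, x ∈ Set.Icc φmin φmax)
    (hn : kfunMax a b φmax ≤ n) (hx : ∀ i, |x i| ∈ Set.Icc φmin φmax) (A : Set ℝ) :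
    ENNReal.ofReal ((1 - kfunMax a b φmax / n) ^ m) * typeLaw ν A
      ≤ ∫⁻ y in A, ENNReal.ofReal (∏ i : Fin m, (1 - kfun a b (x i) y / n)) ∂(typeLaw ν) := by
  have hae := gE_bounds ha hb hφmin hφ ν hsupp n m hn x hx
  calc ENNReal.ofReal ((1 - kfunMax a b φmax / n) ^ m) * typeLaw ν A
      = ∫⁻ _ in A, ENNReal.ofReal ((1 - kfunMax a b φmax / n) ^ m) ∂(typeLaw ν) :=
        (setLIntegral_const A _).symm
    _ ≤ _ := by
        refine lintegral_mono_ae (ae_restrict_of_ae (hae.mono fun y hy => ?_))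
        exact ENNReal.ofReal_le_ofReal hy.1

lemma muExplored_apply {a b : ℝ} {ν : Measure ℝ} {n m : ℕ} {x : Fin m → ℝ}
    (A : Set ℝ) (hA : MeasurableSet A) :
    muExplored a b ν n m x A
      = (∫⁻ y, ENNReal.ofReal (∏ i : Fin m, (1 - kfun a b (x i) y / n)) ∂(typeLaw ν))⁻¹
        * ∫⁻ y in A, ENNReal.ofReal (∏ i : Fin m, (1 - kfun a b (x i) y / n)) ∂(typeLaw ν) := by
  unfold muExplored mnormalize
  rw [Measure.smul_apply, smul_eq_mul, withDensity_apply _ hA,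
    withDensity_apply _ MeasurableSet.univ, Measure.restrict_univ]

lemma Z_bounds {a b φmin φmax : ℝ} {ν : Measure ℝ} {n m : ℕ} {x : Fin m → ℝ}
    (ha : 0 < a) (hb : 0 < b) (hφmin : 0 < φmin) (hφ : φmin ≤ φmax)
    (hν : IsProbabilityMeasure ν) (hsupp : ∀ᵐ x ∂ν, x ∈ Set.Icc φmin φmax)
    (hn : kfunMax a b φmax < n) (hx : ∀ i, |x i| ∈ Set.Icc φmin φmax) :
    (∫⁻ y, ENNReal.ofReal (∏ i : Fin m, (1 - kfun a b (x i) y / n)) ∂(typeLaw ν)) ≠ 0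
    ∧ (∫⁻ y, ENNReal.ofReal (∏ i : Fin m, (1 - kfun a b (x i) y / n)) ∂(typeLaw ν)) ≤ 1 := by
  have hprob : IsProbabilityMeasure (typeLaw ν) := typeLaw_prob ν hν
  have hK : 0 < kfunMax a b φmax := kfunMax_pos ha hb hφmin hφ
  have hn0 : (0:ℝ) < n := lt_of_lt_of_le hK hn.le
  have hl := lint_ge_measure ha hb hφmin hφ hsupp hn.le hx Set.univ
  have hu := lint_le_measure ha hb hφmin hφ hsupp hn.le hx Set.univ
  rw [Measure.restrict_univ] at hl hu
  rw [measure_univ] at hl hu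
  rw [mul_one] at hl
  constructor
  · intro h0
    rw [h0] at hl
    have : (0:ℝ) < (1 - kfunMax a b φmax / n) ^ m := by
      apply pow_pos
      have : kfunMax a b φmax / n < 1 := (div_lt_one hn0).mpr hn
      linarith
    simp [ENNReal.ofReal_eq_zero] at hl
    linarith
  · exact hu

lemma muExplored_prob {a b φmin φmax : ℝ} {ν : Measure ℝ} {n m : ℕ} {x : Fin m → ℝ}
    (ha : 0 < a) (hb : 0 < b) (hφmin : 0 < φmin) (hφ : φmin ≤ φmax)
    (hν : IsProbabilityMeasure ν) (hsupp : ∀ᵐ x ∂ν, x ∈ Set.Icc φmin φmax)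
    (hn : kfunMax a b φmax < n) (hx : ∀ i, |x i| ∈ Set.Icc φmin φmax) :
    IsProbabilityMeasure (muExplored a b ν n m x) := by
  obtain ⟨hZ0, hZ1⟩ := Z_bounds ha hb hφmin hφ hν hsupp hn hx
  constructor
  rw [muExplored_apply Set.univ MeasurableSet.univ, Measure.restrict_univ]
  exact ENNReal.inv_mul_cancel hZ0 (lt_of_le_of_lt hZ1 ENNReal.one_lt_top).ne

lemma tv_bound {a b φmin φmax : ℝ} {ν : Measure ℝ} {n m : ℕ} {x : Fin m → ℝ}
    (ha : 0 < a) (hb : 0 < b) (hφmin : 0 < φmin) (hφ : φmin ≤ φmax)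
    (hν : IsProbabilityMeasure ν) (hsupp : ∀ᵐ x ∂ν, x ∈ Set.Icc φmin φmax)
    (hn : 2 * (m + 1) * kfunMax a b φmax ≤ n) (hx : ∀ i, |x i| ∈ Set.Icc φmin φmax)
    (A : Set ℝ) (hA : MeasurableSet A) :
    |(muExplored a b ν n m x A).toReal - (typeLaw ν A).toReal|
      ≤ 2 * kfunMax a b φmax * m / n := by
  have hprob : IsProbabilityMeasure (typeLaw ν) := typeLaw_prob ν hν
  have hK : 0 < kfunMax a b φmax := kfunMax_pos ha hb hφmin hφ
  have hm1 : (1:ℝ) ≤ m + 1 := by linarith [Nat.cast_nonneg (α := ℝ) m]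
  have hn1 : kfunMax a b φmax ≤ n := by nlinarith
  have hnstrict : kfunMax a b φmax < n := by nlinarith
  have hn0 : (0:ℝ) < n := lt_of_lt_of_le hK hn1
  set c : ℝ := kfunMax a b φmax / n with hc_def
  have hc0 : 0 ≤ c := div_nonneg hK.le hn0.le
  have hcsmall : c * (m + 1) ≤ 1 / 2 := by
    rw [hc_def, div_mul_eq_mul_div, div_le_div_iff₀ hn0 (by norm_num)]
    nlinarith
  have hc1 : c ≤ 1 / 2 := by nlinarith
  have hcm : c * m ≤ 1 / 2 := by nlinarith
  -- measure-theoretic quantities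
  set L := ∫⁻ y in A, ENNReal.ofReal (∏ i : Fin m, (1 - kfun a b (x i) y / n)) ∂(typeLaw ν)
    with hL_def
  set Z := ∫⁻ y, ENNReal.ofReal (∏ i : Fin m, (1 - kfun a b (x i) y / n)) ∂(typeLaw ν)
    with hZ_def
  obtain ⟨hZ0, hZ1⟩ := Z_bounds ha hb hφmin hφ hν hsupp hnstrict hx
  rw [← hZ_def] at hZ0 hZ1
  have hZtop : Z ≠ ⊤ := (lt_of_le_of_lt hZ1 ENNReal.one_lt_top).ne
  have hLle : L ≤ typeLaw ν A := lint_le_measure ha hb hφmin hφ hsupp hn1 hx A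
  have hLge : ENNReal.ofReal ((1 - c) ^ m) * typeLaw ν A ≤ L :=
    lint_ge_measure ha hb hφmin hφ hsupp hn1 hx A
  have hZge : ENNReal.ofReal ((1 - c) ^ m) ≤ Z := by
    have := lint_ge_measure ha hb hφmin hφ hsupp hn1 hx Set.univ
    rw [Measure.restrict_univ, measure_univ, mul_one] at this
    exact this
  have hmuA1 : typeLaw ν A ≤ 1 := prob_le_one
  have hmuAtop : typeLaw ν A ≠ ⊤ := (lt_of_le_of_lt hmuA1 ENNReal.one_lt_top).ne
  have hLtop : L ≠ ⊤ := (lt_of_le_of_lt (le_trans hLle hmuA1) ENNReal.one_lt_top).ne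
  set p : ℝ := (typeLaw ν A).toReal with hp_def
  set t : ℝ := L.toReal with ht_def
  set z : ℝ := Z.toReal with hzr_def
  have hpow0 : (0:ℝ) ≤ (1 - c) ^ m := pow_nonneg (by linarith) m
  have hp0 : 0 ≤ p := ENNReal.toReal_nonneg
  have hp1 : p ≤ 1 := by
    rw [hp_def, ← ENNReal.toReal_one]
    exact ENNReal.toReal_mono ENNReal.one_ne_top hmuA1
  have hz_le : z ≤ 1 := by
    rw [hzr_def, ← ENNReal.toReal_one]
    exact ENNReal.toReal_mono ENNReal.one_ne_top hZ1
  have hz_ge : (1 - c) ^ m ≤ z := by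
    rw [hzr_def, ← ENNReal.toReal_ofReal hpow0]
    exact ENNReal.toReal_mono hZtop hZge
  have ht_le : t ≤ p := ENNReal.toReal_mono hmuAtop hLle
  have ht_ge : (1 - c) ^ m * p ≤ t := by
    have := ENNReal.toReal_mono hLtop hLge
    rw [ENNReal.toReal_mul, ENNReal.toReal_ofReal hpow0] at this
    exact this
  have hmu_eq : (muExplored a b ν n m x A).toReal = t / z := by
    rw [muExplored_apply A hA, ← hZ_def, ← hL_def, ENNReal.toReal_mul, ENNReal.toReal_inv]
    rw [inv_mul_eq_div]
  rw [hmu_eq]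
  have := tv_core hp0 hp1 hc0 hc1 hcm hz_ge hz_le ht_ge ht_le
  calc |t / z - p| ≤ 2 * (c * m) := this
    _ = 2 * kfunMax a b φmax * m / n := by
        rw [hc_def]; ring


/-- **The unexplored types are i.i.d. with law `μ^{(m)}`, which is close to `μ`.**
In the exploration process of the DC-PPM, condition on the first `m` explored vertices having
types `x_1, …, x_m`.  The remaining vertices have i.i.d. types with law `μ` and are joined to
each explored vertex `i` independently with conditional probability `κ(x_i, ·)/n`; the
unexplored vertices `U(m)` are exactly those with no edge to the explored set.  Conditionally
on this event, their types are i.i.d. with law `μ^{(m)}` where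
`dμ^{(m)}(y) = ∏_{i=1}^m (1-κ(x_i,y)/n) dμ(y) / ∫ ∏_{i=1}^m (1-κ(x_i,z)/n) dμ(z)`.
Moreover (regime `m = o(n)`): for every `m` there is `N_m` such that for all `n ≥ N_m` and all
types `(x_1,…,x_m)`, the total variation distance between `μ^{(m)}` and `μ` is at most
`2·κ_max·m/n`. -/
theorem stmt7
    (a b φmin φmax : ℝ) (ha : 0 < a) (hb : 0 < b)
    (hφmin : 0 < φmin) (hφ : φmin ≤ φmax)
    (ν : Measure ℝ) (hν : IsProbabilityMeasure ν)
    (hsupp : ∀ᵐ x ∂ν, x ∈ Set.Icc φmin φmax)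
    (n m k : ℕ) (hkn : kfunMax a b φmax < n)
    (x : Fin m → ℝ) (hx : ∀ i, |x i| ∈ Set.Icc φmin φmax)
    (Ω : Type) [MeasurableSpace Ω] (P : Measure Ω) (hP : IsProbabilityMeasure P)
    (Y : Fin k → Ω → ℝ) (e : Fin k → Fin m → Ω → Bool)
    (hYmeas : ∀ j, Measurable (Y j)) (hemeas : ∀ j i, Measurable (e j i))
    (hindep : iIndepFun (β := fun _ : Fin k => ℝ × (Fin m → Bool)) (m := fun _ => inferInstance)
      (fun j ω => (Y j ω, fun i => e j i ω)) P)
    (hlaw : ∀ j : Fin k, ∀ B : Set ℝ, MeasurableSet B → ∀ gv : Fin m → Bool,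
      P {ω | Y j ω ∈ B ∧ (fun i => e j i ω) = gv}
        = ∫⁻ y in B, ENNReal.ofReal (∏ i : Fin m,
            if gv i = true then kfun a b (x i) y / n else 1 - kfun a b (x i) y / n)
            ∂(typeLaw ν)) :
    -- conditionally on having no edge to the explored set, the types are i.i.d. `μ^{(m)}`
    Measure.map (fun ω (j : Fin k) => Y j ω)
        (P[|{ω | ∀ (j : Fin k) (i : Fin m), e j i ω = false}])
      = Measure.pi (fun _ : Fin k => muExplored a b ν n m x) ∧
    -- total variation bound, uniformly in the explored types, for `n` large given `m`
    (∀ m' : ℕ, ∃ N : ℕ, ∀ n' : ℕ, N ≤ n' →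
      ∀ x' : Fin m' → ℝ, (∀ i, |x' i| ∈ Set.Icc φmin φmax) →
      ∀ A : Set ℝ, MeasurableSet A →
        |(muExplored a b ν n' m' x' A).toReal - (typeLaw ν A).toReal|
          ≤ 2 * kfunMax a b φmax * m' / n') := by
    constructor
    · -- Part 1: conditional i.i.d. law
      haveI hprob : IsProbabilityMeasure (typeLaw ν) := typeLaw_prob ν hν
      haveI hmuprob : IsProbabilityMeasure (muExplored a b ν n m x) :=
        muExplored_prob ha hb hφmin hφ hν hsupp hkn hx
      obtain ⟨hZ0, hZ1⟩ := Z_bounds (m := m) (n := n) (x := x) ha hb hφmin hφ hν hsupp hkn hx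
      have hZtop : (∫⁻ y, ENNReal.ofReal (∏ i : Fin m, (1 - kfun a b (x i) y / n))
          ∂(typeLaw ν)) ≠ ⊤ := (lt_of_le_of_lt hZ1 ENNReal.one_lt_top).ne
      set Z := ∫⁻ y, ENNReal.ofReal (∏ i : Fin m, (1 - kfun a b (x i) y / n)) ∂(typeLaw ν)
        with hZ_def
      set E := {ω : Ω | ∀ (j : Fin k) (i : Fin m), e j i ω = false} with hE_def
      have hEmeas : MeasurableSet E := by
        have : E = ⋂ (j : Fin k) (i : Fin m), (e j i) ⁻¹' {false} := by
          ext ω; simp [hE_def]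
        rw [this]
        exact MeasurableSet.iInter fun j => MeasurableSet.iInter fun i =>
          (hemeas j i) (measurableSet_singleton _)
      have key : ∀ s : Fin k → Set ℝ, (∀ j, MeasurableSet (s j)) →
          P (⋂ j : Fin k, (fun ω => (Y j ω, fun i => e j i ω)) ⁻¹'
              (s j ×ˢ ({fun _ => false} : Set (Fin m → Bool))))
            = ∏ j : Fin k, ∫⁻ y in s j,
                ENNReal.ofReal (∏ i : Fin m, (1 - kfun a b (x i) y / n)) ∂(typeLaw ν) := by
        intro s hs
        have hindep' := hindep.measure_inter_preimage_eq_mul Finset.univ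
          (sets := fun j => s j ×ˢ ({fun _ => false} : Set (Fin m → Bool)))
          (fun j _ => (hs j).prod (measurableSet_singleton _))
        have huniv : (⋂ j ∈ Finset.univ, (fun ω => (Y j ω, fun i => e j i ω)) ⁻¹'
            (s j ×ˢ ({fun _ => false} : Set (Fin m → Bool))))
            = ⋂ j : Fin k, (fun ω => (Y j ω, fun i => e j i ω)) ⁻¹'
              (s j ×ˢ ({fun _ => false} : Set (Fin m → Bool))) := by
          simp
        rw [huniv] at hindep'
        rw [hindep']
        refine Finset.prod_congr rfl fun j _ => ?_
        have hset : (fun ω => (Y j ω, fun i => e j i ω)) ⁻¹'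
            (s j ×ˢ ({fun _ => false} : Set (Fin m → Bool)))
            = {ω | Y j ω ∈ s j ∧ (fun i => e j i ω) = fun _ => false} := by
          ext ω
          simp only [Set.mem_preimage, Set.mem_prod, Set.mem_singleton_iff, Set.mem_setOf_eq]
        rw [hset, hlaw j (s j) (hs j) (fun _ => false)]
        simp
      have hPE : P E = Z ^ k := by
        have hE_eq : E = ⋂ j : Fin k, (fun ω => (Y j ω, fun i => e j i ω)) ⁻¹'
            ((Set.univ : Set ℝ) ×ˢ ({fun _ => false} : Set (Fin m → Bool))) := by
          ext ω; simp [hE_def, Set.mem_prod, funext_iff]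
        rw [hE_eq, key (fun _ => Set.univ) (fun _ => MeasurableSet.univ)]
        simp [Measure.restrict_univ, ← hZ_def, Finset.prod_const, Finset.card_univ]
      have hPE0 : P E ≠ 0 := by
        rw [hPE]; exact pow_ne_zero k hZ0
      have hYmeas' : Measurable fun ω (j : Fin k) => Y j ω :=
        measurable_pi_lambda _ fun j => hYmeas j
      refine (Measure.pi_eq fun s hs => ?_).symm
      rw [Measure.map_apply hYmeas' (MeasurableSet.univ_pi hs)]
      have hpre : (fun ω (j : Fin k) => Y j ω) ⁻¹' Set.univ.pi s = ⋂ j, Y j ⁻¹' s j := by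
        ext ω; simp [Set.mem_pi]
      rw [cond_apply hEmeas P, hpre]
      have hint : E ∩ ⋂ j, Y j ⁻¹' s j
          = ⋂ j : Fin k, (fun ω => (Y j ω, fun i => e j i ω)) ⁻¹'
              (s j ×ˢ ({fun _ => false} : Set (Fin m → Bool))) := by
        ext ω
        simp only [hE_def, Set.mem_inter_iff, Set.mem_iInter, Set.mem_setOf_eq,
          Set.mem_preimage, Set.mem_prod, Set.mem_singleton_iff, funext_iff]
        constructor
        · rintro ⟨h1, h2⟩ j
          exact ⟨h2 j, fun i => h1 j i⟩
        · intro h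
          exact ⟨fun j i => (h j).2 i, fun j => (h j).1⟩
      rw [hint, key s hs, hPE]
      have hrhs : ∀ j : Fin k, muExplored a b ν n m x (s j)
          = Z⁻¹ * ∫⁻ y in s j,
              ENNReal.ofReal (∏ i : Fin m, (1 - kfun a b (x i) y / n)) ∂(typeLaw ν) :=
        fun j => muExplored_apply (s j) (hs j)
      rw [Finset.prod_congr rfl fun j _ => hrhs j, Finset.prod_mul_distrib,
        Finset.prod_const, Finset.card_univ, Fintype.card_fin, ← ENNReal.inv_pow]
    · -- Part 2: total variation bound
      intro m'
      refine ⟨⌈2 * (m' + 1) * kfunMax a b φmax⌉₊, fun n' hn' x' hx' A hA => ?_⟩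
      have hK : 0 < kfunMax a b φmax := kfunMax_pos ha hb hφmin hφ
      have hineq : 2 * ((m' : ℝ) + 1) * kfunMax a b φmax ≤ n' := by
        calc 2 * ((m' : ℝ) + 1) * kfunMax a b φmax
            ≤ (⌈2 * (m' + 1) * kfunMax a b φmax⌉₊ : ℝ) := Nat.le_ceil _
          _ ≤ n' := Nat.cast_le.mpr hn'
      exact tv_bound ha hb hφmin hφ hν hsupp hineq hx' A hA
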